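/- arXiv:1109.5556 — 2 statements merged into one kernel-verified Lean document; each statement's English description precedes it below -/
import Mathlib

section
/- For every m ∈ ℤ and n ∈ ℕ, the functions f_{m,n} satisfy the eigenvalue equation d(d*(f_{m,n})) = 4(n + m₊ + 1) f_{m,n} pointwise on ℂ, where m₊ = max(m,0). -/
open MeasureTheory

/-- Generalized Laguerre polynomial
`L_n^α(x) = Σ_{k=0}^n (-1)^k binom(n+α, n-k) x^k / k!`, where
`binom(n+α, n-k) = Γ(n+α+1)/(Γ(α+k+1)·(n-k)!)`. -/
noncomputable def laguerre (α : ℝ) (n : ℕ) (x : ℝ) : ℝ :=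
  ∑ k ∈ Finset.range (n + 1),
    (-1 : ℝ) ^ k *
      (Real.Gamma ((n : ℝ) + α + 1) /
        (Real.Gamma (α + (k : ℝ) + 1) * (Nat.factorial (n - k) : ℝ))) *
      x ^ k / (Nat.factorial k : ℝ)

/-- The eigenfunctions `f_{m,n}` of the free Weyl operator with homogeneous
magnetic field, identifying `ℝ²` with `ℂ`. -/
noncomputable def fmn (m : ℤ) (n : ℕ) (z : ℂ) : ℂ :=
  (Real.sqrt ((Nat.factorial n : ℝ) / (Real.pi * (Nat.factorial (n + m.natAbs) : ℝ))) : ℂ) *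
    (Real.exp (-(‖z‖) ^ 2 / 2) : ℂ) *
    (if 0 ≤ m then z ^ m.natAbs else (starRingEnd ℂ z) ^ m.natAbs) *
    ((laguerre (m.natAbs : ℝ) n ((‖z‖) ^ 2) : ℝ) : ℂ)

/-- Wirtinger derivative `∂u = (1/2)(∂u/∂x₁ - i ∂u/∂x₂)`. -/
noncomputable def wirtDeriv (u : ℂ → ℂ) (z : ℂ) : ℂ :=
  (1/2) * (fderiv ℝ u z 1 - Complex.I * fderiv ℝ u z Complex.I)

/-- Conjugate Wirtinger derivative `∂̄u = (1/2)(∂u/∂x₁ + i ∂u/∂x₂)`. -/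
noncomputable def wirtDerivBar (u : ℂ → ℂ) (z : ℂ) : ℂ :=
  (1/2) * (fderiv ℝ u z 1 + Complex.I * fderiv ℝ u z Complex.I)

/-- The annihilation-type operator `(d u)(z) = -2i(∂u(z) + (conj z / 2) u(z))`. -/
noncomputable def opD (u : ℂ → ℂ) (z : ℂ) : ℂ :=
  -2 * Complex.I * (wirtDeriv u z + (starRingEnd ℂ z) / 2 * u z)

/-- The creation-type operator `(d* u)(z) = 2i(-∂̄u(z) + (z/2) u(z))`. -/
noncomputable def opDstar (u : ℂ → ℂ) (z : ℂ) : ℂ :=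
  2 * Complex.I * (-(wirtDerivBar u z) + z / 2 * u z)


noncomputable def wmap (a b : ℂ) : ℂ →L[ℝ] ℂ :=
  a • (ContinuousLinearMap.id ℝ ℂ) + b • (Complex.conjCLE.toContinuousLinearMap)

lemma wmap_apply (a b w : ℂ) : wmap a b w = a * w + b * (starRingEnd ℂ w) := by
  simp [wmap, smul_eq_mul]

def wD (u : ℂ → ℂ) (z a b : ℂ) : Prop := HasFDerivAt u (wmap a b) z

lemma wmap_ext {a b : ℂ} {f : ℂ →L[ℝ] ℂ} (h : ∀ w, f w = a * w + b * (starRingEnd ℂ w)) :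
    f = wmap a b := by
  ext1 w; rw [h, wmap_apply]

lemma wD_const (c z : ℂ) : wD (fun _ => c) z 0 0 := by
  have : wmap 0 0 = 0 := by ext1 w; simp [wmap_apply]
  rw [wD, this]; exact hasFDerivAt_const c z

lemma wD_id (z : ℂ) : wD (fun w => w) z 1 0 := by
  have : wmap 1 0 = ContinuousLinearMap.id ℝ ℂ := by ext1 w; simp [wmap_apply]
  rw [wD, this]; exact hasFDerivAt_id z

lemma wD_conj (z : ℂ) : wD (fun w => starRingEnd ℂ w) z 0 1 := by
  have h := Complex.conjCLE.hasFDerivAt (x := z)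
  have e : (Complex.conjCLE : ℂ ≃L[ℝ] ℂ).toContinuousLinearMap = wmap 0 1 := by
    ext1 w; simp [wmap_apply]
  rw [wD]
  exact e ▸ h

lemma wD.add {u v : ℂ → ℂ} {z a b c d : ℂ} (hu : wD u z a b) (hv : wD v z c d) :
    wD (fun w => u w + v w) z (a + c) (b + d) := by
  refine (HasFDerivAt.add hu hv).congr_fderiv ?_
  ext1 w; simp [wmap_apply]; ring

lemma wD.mul {u v : ℂ → ℂ} {z a b c d : ℂ} (hu : wD u z a b) (hv : wD v z c d) :
    wD (fun w => u w * v w) z (a * v z + u z * c) (b * v z + u z * d) := by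
  refine (HasFDerivAt.mul (𝕜 := ℝ) hu hv).congr_fderiv ?_
  ext1 w
  simp [wmap_apply, smul_eq_mul]
  ring

lemma wD.const_mul {u : ℂ → ℂ} {z a b : ℂ} (c : ℂ) (hu : wD u z a b) :
    wD (fun w => c * u w) z (c * a) (c * b) := by
  have := (wD_const c z).mul hu
  simpa using this

lemma wD.congr {u v : ℂ → ℂ} {z a b : ℂ} (hu : wD u z a b) (h : ∀ w, v w = u w) :
    wD v z a b := by
  have : v = u := funext h
  rw [wD, this]; exact hu

lemma wD.exp {u : ℂ → ℂ} {z a b : ℂ} (hu : wD u z a b) :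
    wD (fun w => Complex.exp (u w)) z (Complex.exp (u z) * a) (Complex.exp (u z) * b) := by
  refine (HasFDerivAt.cexp hu).congr_fderiv ?_
  ext1 w; simp [wmap_apply, smul_eq_mul]; ring

lemma wD_pow (p : ℕ) (z : ℂ) : wD (fun w => w ^ p) z ((p : ℂ) * z ^ (p - 1)) 0 := by
  have h := (hasDerivAt_pow p z).hasFDerivAt.restrictScalars ℝ
  refine h.congr_fderiv ?_
  ext1 w
  simp [wmap_apply, smul_eq_mul]
  ring

lemma wD_conj_pow (q : ℕ) (z : ℂ) :
    wD (fun w => (starRingEnd ℂ w) ^ q) z 0 ((q : ℂ) * (starRingEnd ℂ z) ^ (q - 1)) := by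
  have h := (hasDerivAt_pow q (starRingEnd ℂ z)).hasFDerivAt.restrictScalars ℝ
  have h2 := h.comp z (Complex.conjCLE.hasFDerivAt (x := z))
  refine h2.congr_fderiv ?_
  ext1 w
  simp [wmap_apply, smul_eq_mul]
  ring

lemma wD.sum {ι : Type*} {s : Finset ι} {u : ι → ℂ → ℂ} {z : ℂ} {a b : ι → ℂ}
    (h : ∀ i ∈ s, wD (u i) z (a i) (b i)) :
    wD (fun w => ∑ i ∈ s, u i w) z (∑ i ∈ s, a i) (∑ i ∈ s, b i) := by
  refine (HasFDerivAt.fun_sum (fun i hi => h i hi)).congr_fderiv ?_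
  ext1 w
  simp [wmap_apply, Finset.sum_mul]
  rw [← Finset.sum_add_distrib]

lemma wD.wirt {u : ℂ → ℂ} {z a b : ℂ} (h : wD u z a b) : wirtDeriv u z = a := by
  rw [wirtDeriv, h.fderiv]
  simp [wmap_apply]
  ring_nf
  simp [Complex.I_sq]
  ring

lemma wD.wirtBar {u : ℂ → ℂ} {z a b : ℂ} (h : wD u z a b) : wirtDerivBar u z = b := by
  rw [wirtDerivBar, h.fderiv]
  simp [wmap_apply]
  ring_nf
  simp [Complex.I_sq]
  ring

noncomputable def Eg (p q : ℕ) (z : ℂ) : ℂ :=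
  Complex.exp (-(z * starRingEnd ℂ z) / 2) * (z ^ p * (starRingEnd ℂ z) ^ q)

lemma wD.of_eq {u v : ℂ → ℂ} {z a b a' b' : ℂ} (hu : wD u z a b)
    (hv : ∀ w, v w = u w) (ha : a = a') (hb : b = b') : wD v z a' b' := by
  subst ha; subst hb; exact hu.congr hv

lemma wD_quad (z : ℂ) :
    wD (fun w => -(w * starRingEnd ℂ w) / 2) z (-(starRingEnd ℂ z) / 2) (-z / 2) :=
  (((wD_id z).mul (wD_conj z)).const_mul (-1/2)).of_eq
    (fun w => by ring) (by ring) (by ring)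

lemma wD_Eg (p q : ℕ) (z : ℂ) :
    wD (Eg p q) z
      ((p : ℂ) * Eg (p - 1) q z - (starRingEnd ℂ z) / 2 * Eg p q z)
      ((q : ℂ) * Eg p (q - 1) z - z / 2 * Eg p q z) := by
  refine ((wD_quad z).exp.mul ((wD_pow p z).mul (wD_conj_pow q z))).of_eq
    (fun w => by simp only [Eg]) ?_ ?_ <;> simp only [Eg] <;> ring

lemma Eg_succ_left (p q : ℕ) (z : ℂ) : Eg (p + 1) q z = z * Eg p q z := by
  simp only [Eg]; ring

lemma main_comp (n p0 q0 : ℕ) (c : ℕ → ℝ) (hpq : p0 * q0 = 0)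
    (hrec : ∀ j, j < n →
      c (j+1) * (((j:ℝ)+1) * ((p0:ℝ) + (q0:ℝ) + (j:ℝ) + 1)) = c j * ((j:ℝ) - (n:ℝ)))
    (z : ℂ) :
    opD (opDstar (fun w => ∑ k ∈ Finset.range (n+1), (c k : ℂ) * Eg (p0+k) (q0+k) w)) z
    = 4 * ((n:ℂ) + (p0:ℂ) + 1) *
        ∑ k ∈ Finset.range (n+1), (c k : ℂ) * Eg (p0+k) (q0+k) z := by
  set U : ℂ → ℂ := fun w => ∑ k ∈ Finset.range (n+1), (c k : ℂ) * Eg (p0+k) (q0+k) w with hU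
  -- derivative of U
  have hUw : ∀ w : ℂ, wD U w
      (∑ k ∈ Finset.range (n+1), (c k : ℂ) *
        (((p0+k : ℕ) : ℂ) * Eg (p0+k-1) (q0+k) w - (starRingEnd ℂ w) / 2 * Eg (p0+k) (q0+k) w))
      (∑ k ∈ Finset.range (n+1), (c k : ℂ) *
        (((q0+k : ℕ) : ℂ) * Eg (p0+k) (q0+k-1) w - w / 2 * Eg (p0+k) (q0+k) w)) := by
    intro w
    exact wD.sum (fun k _ => (wD_Eg (p0+k) (q0+k) w).const_mul _)
  -- opDstar U as explicit function
  set V : ℂ → ℂ := fun w => ∑ k ∈ Finset.range (n+1),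
      (c k : ℂ) * (2 * Complex.I) *
        (Eg (p0+k+1) (q0+k) w - ((q0+k : ℕ) : ℂ) * Eg (p0+k) (q0+k-1) w) with hVdef
  have hV : opDstar U = V := by
    funext w
    rw [opDstar, (hUw w).wirtBar]
    simp only [hVdef, hU]
    rw [← Finset.sum_neg_distrib, Finset.mul_sum, ← Finset.sum_add_distrib, Finset.mul_sum]
    refine Finset.sum_congr rfl (fun k _ => ?_)
    rw [Eg_succ_left]
    ring
  -- the function W with V = 2I • W
  set W : ℂ → ℂ := fun w => ∑ k ∈ Finset.range (n+1),
      (c k : ℂ) * (Eg (p0+k+1) (q0+k) w + (-((q0+k : ℕ) : ℂ)) * Eg (p0+k) (q0+k-1) w)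
    with hWdef
  have hVW : ∀ w, V w = 2 * Complex.I * W w := by
    intro w
    simp only [hVdef, hWdef, Finset.mul_sum]
    exact Finset.sum_congr rfl (fun k _ => by ring)
  set SA : ℂ := ∑ k ∈ Finset.range (n+1),
      (c k : ℂ) * ((((p0+k+1 : ℕ)) : ℂ) * Eg (p0+k+1-1) (q0+k) z
          - (starRingEnd ℂ z) / 2 * Eg (p0+k+1) (q0+k) z
        + (-((q0+k : ℕ) : ℂ)) * (((p0+k : ℕ) : ℂ) * Eg (p0+k-1) (q0+k-1) z
          - (starRingEnd ℂ z) / 2 * Eg (p0+k) (q0+k-1) z)) with hSA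
  set SB : ℂ := ∑ k ∈ Finset.range (n+1),
      (c k : ℂ) * ((((q0+k : ℕ)) : ℂ) * Eg (p0+k+1) (q0+k-1) z
          - z / 2 * Eg (p0+k+1) (q0+k) z
        + (-((q0+k : ℕ) : ℂ)) * (((q0+k-1 : ℕ) : ℂ) * Eg (p0+k) (q0+k-1-1) z
          - z / 2 * Eg (p0+k) (q0+k-1) z)) with hSB
  have hWw : wD W z SA SB := by
    refine wD.sum (fun k _ => ?_)
    exact ((wD_Eg (p0+k+1) (q0+k) z).add
      ((wD_Eg (p0+k) (q0+k-1) z).const_mul (-((q0+k : ℕ) : ℂ)))).const_mul _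
  have hVw : wD V z (2 * Complex.I * SA) (2 * Complex.I * SB) :=
    (hWw.const_mul (2 * Complex.I)).congr (fun w => (hVW w))
  rw [hV, opD, hVw.wirt, hVW z]
  have step1 : -2 * Complex.I * (2 * Complex.I * SA
        + (starRingEnd ℂ z) / 2 * (2 * Complex.I * W z))
      = 4 * (SA + (starRingEnd ℂ z) / 2 * W z) := by
    have h4 : (-2 : ℂ) * Complex.I * (2 * Complex.I * (SA + (starRingEnd ℂ z) / 2 * W z))
        = -4 * (Complex.I * Complex.I) * (SA + (starRingEnd ℂ z) / 2 * W z) := by ring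
    rw [show -2 * Complex.I * (2 * Complex.I * SA
        + (starRingEnd ℂ z) / 2 * (2 * Complex.I * W z))
      = (-2 : ℂ) * Complex.I * (2 * Complex.I * (SA + (starRingEnd ℂ z) / 2 * W z)) from by ring,
      h4, Complex.I_mul_I]
    ring
  rw [step1]
  have hpqC : ((p0 : ℂ)) * (q0 : ℂ) = 0 := by exact_mod_cast hpq
  have hsplit : SA + (starRingEnd ℂ z) / 2 * W z
      = (∑ k ∈ Finset.range (n+1),
          (c k : ℂ) * (((p0 : ℂ) + (k : ℂ) + 1)) * Eg (p0+k) (q0+k) z)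
        - ∑ k ∈ Finset.range (n+1),
          (c k : ℂ) * (((q0+k : ℕ) : ℂ) * ((p0+k : ℕ) : ℂ)) * Eg (p0+k-1) (q0+k-1) z := by
    rw [hSA, hWdef, Finset.mul_sum, ← Finset.sum_add_distrib, ← Finset.sum_sub_distrib]
    refine Finset.sum_congr rfl (fun k _ => ?_)
    simp only [Nat.add_sub_cancel]
    push_cast
    ring
  have key : (∑ k ∈ Finset.range (n+1),
        (c k : ℂ) * (((q0+k : ℕ) : ℂ) * ((p0+k : ℕ) : ℂ)) * Eg (p0+k-1) (q0+k-1) z)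
      = ∑ k ∈ Finset.range (n+1), (c k : ℂ) * ((k : ℂ) - (n : ℂ)) * Eg (p0+k) (q0+k) z := by
    rw [Finset.sum_range_succ' _ n, Finset.sum_range_succ]
    have h0 : (c 0 : ℂ) * (((q0+0 : ℕ) : ℂ) * ((p0+0 : ℕ) : ℂ)) * Eg (p0+0-1) (q0+0-1) z
        = 0 := by
      push_cast
      rw [show ((q0 : ℂ) + 0) * ((p0 : ℂ) + 0) = (p0 : ℂ) * q0 from by ring, hpqC]
      ring
    have hn : (c n : ℂ) * ((n : ℂ) - (n : ℂ)) * Eg (p0+n) (q0+n) z = 0 := by ring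
    rw [h0, hn, add_zero, add_zero]
    refine Finset.sum_congr rfl (fun j hj => ?_)
    have hjn : j < n := Finset.mem_range.mp hj
    have hrecC : (c (j+1) : ℂ) * (((j : ℂ)+1) * ((p0 : ℂ) + (q0 : ℂ) + (j : ℂ) + 1))
        = (c j : ℂ) * ((j : ℂ) - (n : ℂ)) := by exact_mod_cast hrec j hjn
    simp only [Nat.add_sub_cancel, show p0+(j+1)-1 = p0+j from rfl,
      show q0+(j+1)-1 = q0+j from rfl]
    push_cast
    linear_combination (Eg (p0+j) (q0+j) z) * hrecC
      + (c (j+1) : ℂ) * (Eg (p0+j) (q0+j) z) * hpqC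
  rw [hsplit, key, ← Finset.sum_sub_distrib, Finset.mul_sum, Finset.mul_sum]
  refine Finset.sum_congr rfl (fun k _ => ?_)
  push_cast
  ring

noncomputable def coef (m : ℤ) (n k : ℕ) : ℝ :=
  Real.sqrt ((Nat.factorial n : ℝ) / (Real.pi * (Nat.factorial (n + m.natAbs) : ℝ))) *
    ((-1 : ℝ) ^ k *
      (Real.Gamma ((n : ℝ) + (m.natAbs : ℝ) + 1) /
        (Real.Gamma ((m.natAbs : ℝ) + (k : ℝ) + 1) * (Nat.factorial (n - k) : ℝ))) /
      (Nat.factorial k : ℝ))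

def pm (m : ℤ) : ℕ := if 0 ≤ m then m.natAbs else 0
def qm (m : ℤ) : ℕ := if 0 ≤ m then 0 else m.natAbs

lemma habs (z : ℂ) : (((‖z‖ : ℝ) ^ 2 : ℝ) : ℂ) = z * starRingEnd ℂ z := by
  rw [Complex.sq_norm]
  exact (Complex.mul_conj z).symm

lemma hexp (z : ℂ) : ((Real.exp (-(‖z‖) ^ 2 / 2) : ℝ) : ℂ)
    = Complex.exp (-(z * starRingEnd ℂ z) / 2) := by
  rw [Complex.ofReal_exp]
  congr 1
  push_cast
  rw [show -(((‖z‖ : ℝ) : ℂ)) ^ 2 / 2 = -((((‖z‖ : ℝ) ^ 2 : ℝ) : ℂ)) / 2 from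
    by push_cast; ring, habs]

lemma fmn_expand (m : ℤ) (n : ℕ) : fmn m n = fun z =>
    ∑ k ∈ Finset.range (n + 1), (coef m n k : ℂ) * Eg (pm m + k) (qm m + k) z := by
  funext z
  rw [fmn, laguerre, hexp]
  push_cast
  rw [Finset.mul_sum]
  refine Finset.sum_congr rfl (fun k _ => ?_)
  rw [coef, Eg]
  by_cases hm : 0 ≤ m
  · simp only [if_pos hm, pm, qm]
    push_cast
    rw [show (((‖z‖ : ℝ) : ℂ)^2)^k = (((((‖z‖ : ℝ)^2 : ℝ)) : ℂ))^k from
      by push_cast; ring, habs]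
    rw [pow_add, pow_add, pow_zero]
    ring
  · simp only [if_neg hm, pm, qm]
    push_cast
    rw [show (((‖z‖ : ℝ) : ℂ)^2)^k = (((((‖z‖ : ℝ)^2 : ℝ)) : ℂ))^k from
      by push_cast; ring, habs]
    rw [pow_add, pow_add, pow_zero]
    ring

lemma coef_rec (m : ℤ) (n : ℕ) (j : ℕ) (hj : j < n) :
    coef m n (j+1) * (((j:ℝ)+1) * ((m.natAbs:ℝ) + (j:ℝ) + 1)) = coef m n j * ((j:ℝ) - (n:ℝ)) := by
  set α : ℝ := (m.natAbs : ℝ) with hα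
  have hα0 : (0:ℝ) < α + j + 1 := by positivity
  have hg : Real.Gamma (α + ((j+1 : ℕ) : ℝ) + 1) = (α + j + 1) * Real.Gamma (α + (j:ℝ) + 1) := by
    rw [show α + ((j+1 : ℕ) : ℝ) + 1 = (α + (j:ℝ) + 1) + 1 from by push_cast; ring,
      Real.Gamma_add_one (ne_of_gt hα0)]
  have hcastnj : ((n - j : ℕ) : ℝ) = (n:ℝ) - (j:ℝ) := by
    rw [Nat.cast_sub (le_of_lt hj)]
  have hf : ((n - j).factorial : ℝ) = ((n:ℝ) - (j:ℝ)) * ((n - (j+1)).factorial : ℝ) := by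
    rw [show n - j = (n - (j+1)) + 1 from by omega, Nat.factorial_succ]
    have h5 : ((n - (j+1) + 1 : ℕ) : ℝ) = (n:ℝ) - (j:ℝ) := by
      rw [Nat.cast_add, Nat.cast_sub (by omega)]
      push_cast; ring
    push_cast [h5]
    ring
  have hfj : ((j+1).factorial : ℝ) = ((j:ℝ)+1) * (j.factorial : ℝ) := by
    rw [Nat.factorial_succ]; push_cast; ring
  rw [coef, coef, hg, hf, hfj]
  have h1 : Real.Gamma (α + (j:ℝ) + 1) ≠ 0 := by
    have : (0:ℝ) < Real.Gamma (α + (j:ℝ) + 1) := Real.Gamma_pos_of_pos hα0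
    exact ne_of_gt this
  have h2 : ((n - (j+1)).factorial : ℝ) ≠ 0 := by positivity
  have h3 : ((j.factorial : ℝ)) ≠ 0 := by positivity
  have h4 : (n:ℝ) - (j:ℝ) ≠ 0 := by
    have : (j:ℝ) < (n:ℝ) := by exact_mod_cast hj
    linarith
  field_simp
  ring

theorem fmn_eigenvalue_equation (m : ℤ) (n : ℕ) (z : ℂ) :
    opD (opDstar (fmn m n)) z =
      4 * ((n : ℂ) + ((max m 0 : ℤ) : ℂ) + 1) * fmn m n z := by
  simp only [fmn_expand m n]
  by_cases hm : 0 ≤ m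
  · have hp : pm m = m.natAbs := if_pos hm
    have hq : qm m = 0 := if_pos hm
    rw [hp, hq]
    rw [main_comp n m.natAbs 0 (coef m n) (mul_zero _)
      (fun j hj => by simpa using coef_rec m n j hj) z]
    have hmx : ((max m 0 : ℤ) : ℂ) = ((m.natAbs : ℕ) : ℂ) := by
      rw [max_eq_left hm, ← Int.cast_natCast (R := ℂ), Int.natAbs_of_nonneg hm]
    rw [hmx]
  · have hp : pm m = 0 := if_neg hm
    have hq : qm m = m.natAbs := if_neg hm
    rw [hp, hq]
    rw [main_comp n 0 m.natAbs (coef m n) (zero_mul _)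
      (fun j hj => by simpa using coef_rec m n j hj) z]
    have hmx : ((max m 0 : ℤ) : ℂ) = ((0 : ℕ) : ℂ) := by
      rw [max_eq_right (le_of_lt (lt_of_not_ge hm))]
      push_cast
      ring
    rw [hmx]
end

section
/- For every m ∈ ℤ and n ∈ ℕ one has, pointwise on ℂ, the raising identity d*(f_{m,n}) = 2i · sgn(m) · √(n + m₊ + 1) · f_{m+1, n+θ(−m)}, where m₊ = max(m,0), sgn(m) = 1 for m ≥ 0 and −1 for m < 0, and θ(x) = 1 for x > 0 and 0 for x ≤ 0. -/
open MeasureTheory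

/-! ### Auxiliary: complexified Laguerre sums -/

noncomputable def lagCoef (a n k : ℕ) : ℂ :=
  (-1 : ℂ) ^ k * ((n + a).factorial : ℂ) /
    (((a + k).factorial : ℂ) * ((n - k).factorial : ℂ) * (k.factorial : ℂ))

noncomputable def lagC (a n : ℕ) (s : ℂ) : ℂ :=
  ∑ k ∈ Finset.range (n + 1), lagCoef a n k * s ^ k

noncomputable def lagC' (a n : ℕ) (s : ℂ) : ℂ :=
  ∑ k ∈ Finset.range (n + 1), lagCoef a n k * ((k : ℂ) * s ^ (k - 1))

lemma fact_ne (j : ℕ) : ((j.factorial : ℂ)) ≠ 0 :=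
  Nat.cast_ne_zero.mpr j.factorial_ne_zero

lemma lag_ofReal (a n : ℕ) (x : ℝ) :
    ((laguerre (a : ℝ) n x : ℝ) : ℂ) = lagC a n (x : ℂ) := by
  unfold laguerre lagC lagCoef
  push_cast
  refine Finset.sum_congr rfl fun k hk => ?_
  have h1 : (n : ℝ) + (a : ℝ) + 1 = ((n + a : ℕ) : ℝ) + 1 := by push_cast; ring
  have h2 : (a : ℝ) + (k : ℝ) + 1 = ((a + k : ℕ) : ℝ) + 1 := by push_cast; ring
  rw [h1, h2, Real.Gamma_nat_eq_factorial, Real.Gamma_nat_eq_factorial]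
  push_cast
  ring

lemma hasDerivAt_lagC (a n : ℕ) (s : ℂ) :
    HasDerivAt (fun t => lagC a n t) (lagC' a n s) s := by
  unfold lagC lagC'
  exact HasDerivAt.fun_sum fun k _ => (hasDerivAt_pow k s).const_mul _

lemma coef1 (a k r : ℕ) :
    lagCoef (a + 1) (k + r + 1) k
      = lagCoef a (k + r + 1) k - lagCoef a (k + r + 1) (k + 1) * ((k : ℂ) + 1) := by
  unfold lagCoef
  have h1 : k + r + 1 - k = r + 1 := by omega
  have h2 : k + r + 1 - (k + 1) = r := by omega
  have h3 : k + r + 1 + (a + 1) = (k + r + 1 + a) + 1 := by omega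
  have h4 : a + 1 + k = (a + k) + 1 := by omega
  have h5 : a + (k + 1) = (a + k) + 1 := by omega
  rw [h1, h2, h3, h4, h5]
  have := fact_ne (k + r + 1 + a + 1)
  have := fact_ne (a + k + 1)
  have := fact_ne (r + 1)
  have := fact_ne (k)
  have := fact_ne (k + r + 1 + a)
  have := fact_ne (a + k)
  have := fact_ne (r)
  have := fact_ne (k + 1)
  field_simp [fact_ne]
  rw [Nat.factorial_succ (k + r + 1 + a), Nat.factorial_succ (a + k),
    Nat.factorial_succ k, Nat.factorial_succ r]
  push_cast
  ring

lemma coef_top (a n : ℕ) : lagCoef a n n = (-1 : ℂ) ^ n / n.factorial := by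
  unfold lagCoef
  rw [Nat.sub_self, Nat.add_comm a n, Nat.factorial_zero]
  have := fact_ne (n + a)
  have := fact_ne (n)
  field_simp [fact_ne]
  ring

lemma coefJ0 (b n : ℕ) :
    ((b : ℂ) + 1) * lagCoef (b + 1) n 0 = ((n : ℂ) + 1) * lagCoef b (n + 1) 0 := by
  unfold lagCoef
  simp only [Nat.sub_zero, Nat.add_zero, Nat.factorial_zero, pow_zero]
  have h1 : n + (b + 1) = (n + b) + 1 := by omega
  have h2 : n + 1 + b = (n + b) + 1 := by omega
  rw [h1, h2]
  have := fact_ne (n + b + 1)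
  have := fact_ne (b + 1)
  have := fact_ne (n + 1)
  have := fact_ne (n)
  have := fact_ne (n + b)
  have := fact_ne (b)
  field_simp [fact_ne]
  simp only [Nat.factorial_succ]
  push_cast
  ring

lemma coefJtop (b n : ℕ) :
    lagCoef (b + 1) n n = -((n : ℂ) + 1) * lagCoef b (n + 1) (n + 1) := by
  unfold lagCoef
  rw [Nat.sub_self, Nat.sub_self]
  have h1 : n + (b + 1) = (n + b) + 1 := by omega
  have h2 : n + 1 + b = (n + b) + 1 := by omega
  have h3 : b + 1 + n = (b + n) + 1 := by omega
  have h4 : b + (n + 1) = (b + n) + 1 := by omega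
  rw [h1, h2, h3, h4]
  have := fact_ne (n + b + 1)
  have := fact_ne (b + n + 1)
  have := fact_ne (n + 1)
  have := fact_ne (n)
  have := fact_ne (n + b)
  have := fact_ne (b + n)
  field_simp [fact_ne]
  simp only [Nat.factorial_succ]
  push_cast
  ring

lemma coefJmid (b k r : ℕ) :
    lagCoef (b + 1) (k + r + 1) k
        - ((k : ℂ) + (b : ℂ) + 2) * lagCoef (b + 1) (k + r + 1) (k + 1)
      = -(((k + r + 1 : ℕ) : ℂ) + 1) * lagCoef b (k + r + 1 + 1) (k + 1) := by
  unfold lagCoef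
  have h1 : k + r + 1 - k = r + 1 := by omega
  have h2 : k + r + 1 - (k + 1) = r := by omega
  have h3 : k + r + 1 + 1 - (k + 1) = r + 1 := by omega
  have h4 : k + r + 1 + (b + 1) = (k + r + 1 + b) + 1 := by omega
  have h5 : k + r + 1 + 1 + b = (k + r + 1 + b) + 1 := by omega
  have h6 : b + 1 + k = (b + k) + 1 := by omega
  have h7 : b + 1 + (k + 1) = ((b + k) + 1) + 1 := by omega
  have h8 : b + (k + 1) = (b + k) + 1 := by omega
  rw [h1, h2, h3, h4, h5, h6, h7, h8]
  have := fact_ne (k + r + 1 + b + 1)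
  have := fact_ne (b + k + 1)
  have := fact_ne (r + 1)
  have := fact_ne (k)
  have := fact_ne (k + r + 1 + b)
  have := fact_ne (b + k + 1 + 1)
  have := fact_ne (r)
  have := fact_ne (k + 1)
  have := fact_ne (b + k)
  field_simp [fact_ne]
  simp only [Nat.factorial_succ]
  push_cast
  ring

lemma lag_id1 (a n : ℕ) (s : ℂ) :
    lagC a n s - lagC' a n s = lagC (a + 1) n s := by
  unfold lagC lagC'
  rw [Finset.sum_range_succ' (fun k => lagCoef a n k * ((k : ℂ) * s ^ (k - 1))) n]
  rw [Finset.sum_range_succ (fun k => lagCoef a n k * s ^ k) n]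
  rw [Finset.sum_range_succ (fun k => lagCoef (a + 1) n k * s ^ k) n]
  simp only [Nat.cast_zero, zero_mul, mul_zero, add_zero, Nat.add_sub_cancel]
  rw [coef_top a n, coef_top (a + 1) n]
  push_cast
  have hs : (∑ x ∈ Finset.range n, lagCoef a n x * s ^ x)
      - ∑ x ∈ Finset.range n, lagCoef a n (x + 1) * (((x : ℂ) + 1) * s ^ x)
      = ∑ x ∈ Finset.range n, lagCoef (a + 1) n x * s ^ x := by
    rw [← Finset.sum_sub_distrib]
    refine Finset.sum_congr rfl fun k hk => ?_
    have hkn : k < n := Finset.mem_range.mp hk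
    have h := coef1 a k (n - k - 1)
    rw [show k + (n - k - 1) + 1 = n from by omega] at h
    rw [h]; ring
  linear_combination hs

lemma mul_lagC' (a n : ℕ) (s : ℂ) :
    s * lagC' a n s = ∑ k ∈ Finset.range (n + 1), lagCoef a n k * ((k : ℂ) * s ^ k) := by
  unfold lagC'
  rw [Finset.mul_sum]
  refine Finset.sum_congr rfl fun k _ => ?_
  cases k with
  | zero => simp
  | succ k =>
    simp only [Nat.add_sub_cancel, pow_succ]
    push_cast
    ring

lemma lag_id2 (b n : ℕ) (s : ℂ) :
    s * lagC (b + 1) n s - s * lagC' (b + 1) n s - ((b : ℂ) + 1) * lagC (b + 1) n s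
      = -((n : ℂ) + 1) * lagC b (n + 1) s := by
  rw [mul_lagC']
  unfold lagC
  rw [Finset.mul_sum, Finset.mul_sum]
  have hU : ∀ k, s * (lagCoef (b + 1) n k * s ^ k) = lagCoef (b + 1) n k * s ^ (k + 1) := by
    intro k; rw [pow_succ]; ring
  simp only [hU]
  have h1 : (∑ k ∈ Finset.range (n + 1), lagCoef (b + 1) n k * ((k : ℂ) * s ^ k))
        + ∑ k ∈ Finset.range (n + 1), ((b : ℂ) + 1) * (lagCoef (b + 1) n k * s ^ k)
      = ((b : ℂ) + 1) * lagCoef (b + 1) n 0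
        + ∑ k ∈ Finset.range n,
            (((k : ℂ) + 1) + (b : ℂ) + 1) * (lagCoef (b + 1) n (k + 1) * s ^ (k + 1)) := by
    rw [← Finset.sum_add_distrib]
    rw [Finset.sum_range_succ'
      (fun k => lagCoef (b + 1) n k * ((k : ℂ) * s ^ k)
        + ((b : ℂ) + 1) * (lagCoef (b + 1) n k * s ^ k)) n]
    simp only [Nat.cast_zero, zero_mul, mul_zero, zero_add, pow_zero, mul_one]
    rw [add_comm]
    congr 1
    refine Finset.sum_congr rfl fun k _ => ?_
    push_cast
    ring
  have h2 : (∑ k ∈ Finset.range (n + 1), lagCoef (b + 1) n k * s ^ (k + 1))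
      = (∑ k ∈ Finset.range n, lagCoef (b + 1) n k * s ^ (k + 1))
        + lagCoef (b + 1) n n * s ^ (n + 1) :=
    Finset.sum_range_succ _ n
  have h4 : (∑ k ∈ Finset.range (n + 1 + 1), lagCoef b (n + 1) k * s ^ k)
      = ((∑ k ∈ Finset.range n, lagCoef b (n + 1) (k + 1) * s ^ (k + 1))
          + lagCoef b (n + 1) (n + 1) * s ^ (n + 1)) + lagCoef b (n + 1) 0 := by
    rw [Finset.sum_range_succ' (fun k => lagCoef b (n + 1) k * s ^ k) (n + 1)]
    rw [Finset.sum_range_succ (fun k => lagCoef b (n + 1) (k + 1) * s ^ (k + 1)) n]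
    simp
  have hs : (∑ k ∈ Finset.range n, lagCoef (b + 1) n k * s ^ (k + 1))
      - ∑ k ∈ Finset.range n,
          (((k : ℂ) + 1) + (b : ℂ) + 1) * (lagCoef (b + 1) n (k + 1) * s ^ (k + 1))
      = (-((n : ℂ) + 1)) * ∑ k ∈ Finset.range n, lagCoef b (n + 1) (k + 1) * s ^ (k + 1) := by
    rw [Finset.mul_sum, ← Finset.sum_sub_distrib]
    refine Finset.sum_congr rfl fun k hk => ?_
    have hkn : k < n := Finset.mem_range.mp hk
    have h := coefJmid b k (n - k - 1)
    rw [show k + (n - k - 1) + 1 = n from by omega] at h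
    linear_combination s ^ (k + 1) * h
  rw [h2, h4]
  linear_combination -h1 + hs + s ^ (n + 1) * coefJtop b n - coefJ0 b n

/-! ### Derivative computations -/

lemma wirtDerivBar_hasFDeriv {u : ℂ → ℂ} {D : ℂ →L[ℝ] ℂ} {z : ℂ} (h : HasFDerivAt u D z) :
    wirtDerivBar u z = (1/2) * (D 1 + Complex.I * D Complex.I) := by
  unfold wirtDerivBar; rw [h.fderiv]

lemma hasFDerivAt_conj (z : ℂ) :
    HasFDerivAt (fun w : ℂ => (starRingEnd ℂ) w)
      (Complex.conjCLE.toContinuousLinearMap) z :=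
  Complex.conjCLE.toContinuousLinearMap.hasFDerivAt

lemma wbar_A (c : ℝ) (a n : ℕ) (z : ℂ) :
    wirtDerivBar (fun w => (c : ℂ) *
        (Complex.exp ((-(1/2) : ℂ) * (w * (starRingEnd ℂ) w)) * w ^ a *
          lagC a n (w * (starRingEnd ℂ) w))) z
      = (c : ℂ) * Complex.exp ((-(1/2) : ℂ) * (z * (starRingEnd ℂ) z)) * z ^ (a + 1) *
          (lagC' a n (z * (starRingEnd ℂ) z)
            - lagC a n (z * (starRingEnd ℂ) z) / 2) := by
  have hq := (hasFDerivAt_id z).mul (hasFDerivAt_conj z)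
  have harg := hq.const_mul ((-(1/2) : ℂ))
  have hexp := ((Complex.hasDerivAt_exp _).hasFDerivAt.restrictScalars ℝ).comp z harg
  have hpow := (hasDerivAt_pow a z).hasFDerivAt.restrictScalars ℝ
  have hlag := ((hasDerivAt_lagC a n (z * (starRingEnd ℂ) z)).hasFDerivAt.restrictScalars ℝ).comp z hq
  have htot := ((hexp.mul hpow).mul hlag).const_mul ((c : ℂ))
  have h2 : HasFDerivAt (fun w => (c : ℂ) *
      (Complex.exp ((-(1/2) : ℂ) * (w * (starRingEnd ℂ) w)) * w ^ a *
        lagC a n (w * (starRingEnd ℂ) w))) _ z := htot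
  rw [wirtDerivBar_hasFDeriv h2]
  simp only [ContinuousLinearMap.smul_apply, ContinuousLinearMap.add_apply,
    ContinuousLinearMap.comp_apply, ContinuousLinearMap.coe_restrictScalars',
    ContinuousLinearMap.smulRight_apply, ContinuousLinearMap.one_apply,
    ContinuousLinearMap.coe_id', id_eq, Complex.conjCLE_apply, smul_eq_mul,
    ContinuousLinearEquiv.coe_coe, map_one, Complex.conj_I, mul_one]
  simp only [Function.comp_apply]
  simp only [ContinuousLinearMap.toSpanSingleton_apply, Pi.mul_apply, id_eq, Function.comp_apply,
    smul_eq_mul, Complex.conjCLE_apply, ContinuousLinearMap.coe_id', ContinuousLinearMap.coe_comp',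
    ContinuousLinearMap.coe_restrictScalars', ContinuousLinearMap.add_apply, ContinuousLinearMap.smul_apply,
    ContinuousLinearEquiv.coe_coe, Complex.conj_I, map_one, mul_one]
  rw [pow_succ]
  ring_nf
  simp only [Complex.I_sq]
  ring

lemma wbar_B (c : ℝ) (a n : ℕ) (z : ℂ) :
    wirtDerivBar (fun w => (c : ℂ) *
        (Complex.exp ((-(1/2) : ℂ) * (w * (starRingEnd ℂ) w)) * ((starRingEnd ℂ) w) ^ a *
          lagC a n (w * (starRingEnd ℂ) w))) z
      = (c : ℂ) * Complex.exp ((-(1/2) : ℂ) * (z * (starRingEnd ℂ) z)) *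
          (z * ((starRingEnd ℂ) z) ^ a *
              (lagC' a n (z * (starRingEnd ℂ) z) - lagC a n (z * (starRingEnd ℂ) z) / 2)
            + (a : ℂ) * ((starRingEnd ℂ) z) ^ (a - 1) * lagC a n (z * (starRingEnd ℂ) z)) := by
  have hq := (hasFDerivAt_id z).mul (hasFDerivAt_conj z)
  have harg := hq.const_mul ((-(1/2) : ℂ))
  have hexp := ((Complex.hasDerivAt_exp _).hasFDerivAt.restrictScalars ℝ).comp z harg
  have hpow := ((hasDerivAt_pow a ((starRingEnd ℂ) z)).hasFDerivAt.restrictScalars ℝ).comp z (hasFDerivAt_conj z)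
  have hlag := ((hasDerivAt_lagC a n (z * (starRingEnd ℂ) z)).hasFDerivAt.restrictScalars ℝ).comp z hq
  have htot := ((hexp.mul hpow).mul hlag).const_mul ((c : ℂ))
  have h2 : HasFDerivAt (fun w => (c : ℂ) *
      (Complex.exp ((-(1/2) : ℂ) * (w * (starRingEnd ℂ) w)) * ((starRingEnd ℂ) w) ^ a *
        lagC a n (w * (starRingEnd ℂ) w))) _ z := htot
  rw [wirtDerivBar_hasFDeriv h2]
  simp only [ContinuousLinearMap.smul_apply, ContinuousLinearMap.add_apply,
    ContinuousLinearMap.comp_apply, ContinuousLinearMap.coe_restrictScalars',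
    ContinuousLinearMap.smulRight_apply, ContinuousLinearMap.one_apply,
    ContinuousLinearMap.coe_id', id_eq, Complex.conjCLE_apply, smul_eq_mul,
    ContinuousLinearEquiv.coe_coe, map_one, Complex.conj_I, mul_one]
  simp only [Function.comp_apply]
  simp only [ContinuousLinearMap.toSpanSingleton_apply, Pi.mul_apply, id_eq, Function.comp_apply,
    smul_eq_mul, Complex.conjCLE_apply, ContinuousLinearMap.coe_id', ContinuousLinearMap.coe_comp',
    ContinuousLinearMap.coe_restrictScalars', ContinuousLinearMap.add_apply, ContinuousLinearMap.smul_apply,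
    ContinuousLinearEquiv.coe_coe, Complex.conj_I, map_one, mul_one]
  ring_nf
  simp only [Complex.I_sq]
  ring

/-! ### Bridge -/

lemma fmn_eq (m : ℤ) (n : ℕ) :
    fmn m n = fun z =>
      ((Real.sqrt ((Nat.factorial n : ℝ) / (Real.pi * (Nat.factorial (n + m.natAbs) : ℝ))) : ℝ) : ℂ) *
      (Complex.exp ((-(1/2) : ℂ) * (z * (starRingEnd ℂ) z)) *
        (if 0 ≤ m then z ^ m.natAbs else ((starRingEnd ℂ) z) ^ m.natAbs) *
        lagC m.natAbs n (z * (starRingEnd ℂ) z)) := by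
  funext z
  unfold fmn
  have hzz : z * (starRingEnd ℂ) z = ((‖z‖ ^ 2 : ℝ) : ℂ) := by
    rw [Complex.mul_conj]; norm_cast; exact (Complex.sq_norm z).symm
  rw [hzz, ← lag_ofReal]
  rw [show ((-(1/2) : ℂ) * ((‖z‖ ^ 2 : ℝ) : ℂ)) = (((-(‖z‖) ^ 2 / 2 : ℝ)) : ℂ) by push_cast; ring]
  rw [← Complex.ofReal_exp]
  ring

lemma constA (a n : ℕ) :
    Real.sqrt ((n : ℝ) + (a : ℝ) + 1)
        * Real.sqrt ((Nat.factorial n : ℝ) / (Real.pi * (Nat.factorial (n + (a + 1)) : ℝ)))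
      = Real.sqrt ((Nat.factorial n : ℝ) / (Real.pi * (Nat.factorial (n + a) : ℝ))) := by
  rw [← Real.sqrt_mul (by positivity)]
  congr 1
  rw [show n + (a + 1) = (n + a) + 1 from by omega, Nat.factorial_succ]
  have h1 : ((n + a).factorial : ℝ) ≠ 0 := Nat.cast_ne_zero.mpr (n + a).factorial_ne_zero
  have h2 : ((n : ℝ) + (a : ℝ) + 1) ≠ 0 := by positivity
  have h3 : Real.pi ≠ 0 := Real.pi_ne_zero
  push_cast
  field_simp

lemma constB (b n : ℕ) :
    Real.sqrt ((n : ℝ) + 1)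
        * Real.sqrt ((Nat.factorial (n + 1) : ℝ) / (Real.pi * (Nat.factorial (n + 1 + b) : ℝ)))
      = ((n : ℝ) + 1) * Real.sqrt ((Nat.factorial n : ℝ) / (Real.pi * (Nat.factorial (n + (b + 1)) : ℝ))) := by
  have hs : ((n : ℝ) + 1) = Real.sqrt (((n : ℝ) + 1) ^ 2) := (Real.sqrt_sq (by positivity)).symm
  nth_rewrite 2 [hs]
  rw [← Real.sqrt_mul (by positivity), ← Real.sqrt_mul (by positivity)]
  congr 1
  rw [show n + 1 + b = n + (b + 1) from by omega, Nat.factorial_succ n]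
  push_cast
  ring

theorem fmn_raising_identity (m : ℤ) (n : ℕ) (z : ℂ) :
    opDstar (fmn m n) z =
      2 * Complex.I * (if 0 ≤ m then (1 : ℂ) else -1) *
        (Real.sqrt ((n : ℝ) + ((max m 0 : ℤ) : ℝ) + 1) : ℂ) *
        fmn (m + 1) (n + if 0 < -m then 1 else 0) z := by
  by_cases hm : 0 ≤ m
  · -- raising case, m ≥ 0
    have hnat : (m + 1).natAbs = m.natAbs + 1 := by omega
    have hif1 : (0 ≤ m + 1) := by omega
    have hif2 : ¬ (0 < -m) := by omega
    have hmax : ((max m 0 : ℤ) : ℝ) = (m.natAbs : ℝ) := by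
      rw [max_eq_left hm, Nat.cast_natAbs, _root_.abs_of_nonneg hm]
    unfold opDstar
    rw [fmn_eq m n, fmn_eq (m + 1) (n + if 0 < -m then 1 else 0)]
    simp only [if_pos hm, if_pos hif1, if_neg hif2, hnat, add_zero, hmax, ← Nat.add_assoc]
    rw [wbar_A]
    have hid := lag_id1 m.natAbs n (z * (starRingEnd ℂ) z)
    have hc : ((Real.sqrt ((n : ℝ) + (m.natAbs : ℝ) + 1) : ℝ) : ℂ)
          * ((Real.sqrt ((Nat.factorial n : ℝ) / (Real.pi * (Nat.factorial (n + (m.natAbs + 1)) : ℝ))) : ℝ) : ℂ)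
        = ((Real.sqrt ((Nat.factorial n : ℝ) / (Real.pi * (Nat.factorial (n + m.natAbs) : ℝ))) : ℝ) : ℂ) := by
      rw [← Complex.ofReal_mul, constA]
    simp only [← Nat.add_assoc] at hc
    rw [← hid]
    set E := Complex.exp ((-(1/2) : ℂ) * (z * (starRingEnd ℂ) z)) with hE
    set L := lagC m.natAbs n (z * (starRingEnd ℂ) z) with hL
    set L' := lagC' m.natAbs n (z * (starRingEnd ℂ) z) with hL'
    rw [pow_succ]
    linear_combination (-(2 * Complex.I * E * z ^ m.natAbs * z * (L - L'))) * hc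
  · -- lowering case, m < 0
    push_neg at hm
    obtain ⟨b, hab⟩ : ∃ b : ℕ, m.natAbs = b + 1 := ⟨(m + 1).natAbs, by omega⟩
    have hnat : (m + 1).natAbs = b := by omega
    have hif2 : (0 < -m) := by omega
    have hmax : ((max m 0 : ℤ) : ℝ) = 0 := by
      rw [max_eq_right (by omega : m ≤ (0:ℤ))]; simp
    unfold opDstar
    rw [fmn_eq m n, fmn_eq (m + 1) (n + if 0 < -m then 1 else 0)]
    simp only [if_neg (by omega : ¬ (0 ≤ m)), if_pos hif2, hnat, hmax, hab, add_zero,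
      ← Nat.add_assoc]
    have hpw : (if 0 ≤ m + 1 then z ^ b else ((starRingEnd ℂ) z) ^ b)
        = ((starRingEnd ℂ) z) ^ b := by
      by_cases h : 0 ≤ m + 1
      · rw [if_pos h]
        have : b = 0 := by omega
        simp [this]
      · rw [if_neg h]
    rw [hpw, wbar_B]
    have hid := lag_id2 b n (z * (starRingEnd ℂ) z)
    have hc : ((Real.sqrt ((n : ℝ) + 1) : ℝ) : ℂ)
          * ((Real.sqrt ((Nat.factorial (n + 1) : ℝ) / (Real.pi * (Nat.factorial (n + 1 + b) : ℝ))) : ℝ) : ℂ)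
        = ((n : ℂ) + 1) * ((Real.sqrt ((Nat.factorial n : ℝ) / (Real.pi * (Nat.factorial (n + (b + 1)) : ℝ))) : ℝ) : ℂ) := by
      rw [← Complex.ofReal_mul, constB]; push_cast; ring
    simp only [← Nat.add_assoc] at hc
    set E := Complex.exp ((-(1/2) : ℂ) * (z * (starRingEnd ℂ) z)) with hE
    set L := lagC (b + 1) n (z * (starRingEnd ℂ) z) with hL
    set L' := lagC' (b + 1) n (z * (starRingEnd ℂ) z) with hL'
    set M := lagC b (n + 1) (z * (starRingEnd ℂ) z) with hM
    set C := ((Real.sqrt ((Nat.factorial n : ℝ) / (Real.pi * (Nat.factorial (n + b + 1) : ℝ))) : ℝ) : ℂ) with hC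
    have hbb : ((b + 1 : ℕ) : ℂ) = (b : ℂ) + 1 := by push_cast; ring
    have hb1 : (b + 1) - 1 = b := by omega
    rw [hbb, hb1, pow_succ]
    linear_combination (2 * Complex.I * E * ((starRingEnd ℂ) z) ^ b * C) * hid
      + (2 * Complex.I * E * ((starRingEnd ℂ) z) ^ b * M) * hc
end
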